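/- Let T ⪯ P be Schubert symbols of size m in [1,N] for a type B or C Grassmannian, and define P' = {p'_1, …, p'_m} by: p'_i = p_i if p_i < t_{i+1}; p'_i = t_{i+1} if p_i ≥ t_{i+1} and t_{i+1}−1 ∉ C_{P,T}; and p'_i = max{c ∈ [t_i, t_{i+1}−1] : c ∉ L_{P,T}} if p_i ≥ t_{i+1} and t_{i+1}−1 ∈ C_{P,T}. Then P' is a Schubert symbol: its elements are m distinct integers p'_1 < … < p'_m, and p'_i + p'_j ≠ N+1 for all i, j. -/
import Mathlib


open scoped Classical

/-- `p : ℕ → ℕ` encodes a Schubert symbol `{p 1 < … < p m} ⊆ [1,N]`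
with the conventions `p 0 = 0` and `p (m+1) = N+1`, and the isotropic
condition that no two elements sum to `N+1`. -/
structure IsSSym (N m : ℕ) (p : ℕ → ℕ) : Prop where
  zero : p 0 = 0
  top : p (m+1) = N+1
  mono : ∀ i j, i < j → j ≤ m+1 → p i < p j
  ub : ∀ i, 1 ≤ i → i ≤ m → p i ≤ N
  iso : ∀ i j, 1 ≤ i → i ≤ m → 1 ≤ j → j ≤ m → p i + p j ≠ N+1

/-- The underlying set `{p 1, …, p m}` of a Schubert symbol. -/
def symSet (m : ℕ) (p : ℕ → ℕ) : Finset ℕ := (Finset.Icc 1 m).image p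

/-- Componentwise order `t_i ≤ p_i` on Schubert symbols. -/
def leS (m : ℕ) (t p : ℕ → ℕ) : Prop := ∀ i, 1 ≤ i → i ≤ m → t i ≤ p i

/-- `c` is a visible cut of the Richardson diagram `D(P,T)`:
`p_i ≤ c < t_{i+1}` for some `0 ≤ i ≤ m`. -/
def visCut (m : ℕ) (p t : ℕ → ℕ) (c : ℕ) : Prop :=
  ∃ i, i ≤ m ∧ p i ≤ c ∧ c < t (i+1)

/-- `c` is an apparent cut of `D(P,T)`: `c` or `N−c` is a visible cut. -/
def appCut (N m : ℕ) (p t : ℕ → ℕ) (c : ℕ) : Prop :=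
  visCut m p t c ∨ visCut m p t (N - c)

/-- `c` is a zero column of `D(P,T)`: `p_j < c < t_{j+1}` for some `j`. -/
def zeroCol (m : ℕ) (p t : ℕ → ℕ) (c : ℕ) : Prop :=
  ∃ j, j ≤ m ∧ p j < c ∧ c < t (j+1)

/-- `(j,c)` is a lone star of `D(P,T)` with respect to the cut predicate `cut`. -/
def loneStar (m : ℕ) (p t : ℕ → ℕ) (cut : ℕ → Prop) (j c : ℕ) : Prop :=
  1 ≤ j ∧ j ≤ m ∧ t j ≤ c ∧ c ≤ p j ∧
    ((c = t j ∧ cut c) ∨ (c = p j ∧ cut (c-1)))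

/-- `c ∈ 𝓛_{P,T}` : `c` is a zero column, or column `N+1−c` contains a lone star. -/
def LSet (N m : ℕ) (p t : ℕ → ℕ) (cut : ℕ → Prop) (c : ℕ) : Prop :=
  1 ≤ c ∧ c ≤ N ∧
    (zeroCol m p t c ∨ ∃ j, loneStar m p t cut j (N+1-c))

/-- `[P] = P ∪ {N+1−p : p ∈ P}`. -/
def brP (N : ℕ) (P : Finset ℕ) : Finset ℕ := P ∪ P.image (fun p => N+1-p)

/-- The type-`D` type function `t(P) ∈ {0,1,2}`: if `n+1 ∈ [P]` it is the parity of
`#([1,n+1] \ P)`; otherwise it is `2`. -/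
def tD (n : ℕ) (P : Finset ℕ) : ℕ :=
  if (n+1) ∈ P ∨ (n+2) ∈ P then (Finset.Icc 1 (n+1) \ P).card % 2 else 2

/-- The type-`D` Bruhat order `T ⪯ P` on Schubert symbols for `OG(m, 2n+2)`. -/
def bruhatD (n m : ℕ) (t p : ℕ → ℕ) : Prop :=
  leS m t p ∧ ∀ c, 1 ≤ c → c ≤ n →
    Finset.Icc (c+1) (n+1) ⊆ brP (2*n+2) (symSet m p) →
    Finset.Icc (c+1) (n+1) ⊆ brP (2*n+2) (symSet m t) →
    ((symSet m p) ∩ Finset.Icc 1 c).card = ((symSet m t) ∩ Finset.Icc 1 c).card →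
    tD n (symSet m p) = tD n (symSet m t)

/-- The exceptional center cut `n+1` exists in `D(P,T)`:
`p_i = n+2 ≤ t_{i+1}` or `t_i = n+1 ≥ p_{i−1}` for some `i`. -/
def centerCut (n m : ℕ) (p t : ℕ → ℕ) : Prop :=
  ∃ i, 1 ≤ i ∧ i ≤ m ∧
    ((p i = n+2 ∧ n+2 ≤ t (i+1)) ∨ (t i = n+1 ∧ p (i-1) ≤ n+1))

/-- `c ∈ [1,n]` is a cut candidate of `D(P,T)`:
`[c+1,n+1] ⊆ [P] ∩ [T]` and `#(T ∩ [1,c]) = #(P ∩ [1,c]) + 1`. -/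
def cutCandidate (n m : ℕ) (p t : ℕ → ℕ) (c : ℕ) : Prop :=
  1 ≤ c ∧ c ≤ n ∧
  Finset.Icc (c+1) (n+1) ⊆ brP (2*n+2) (symSet m p) ∧
  Finset.Icc (c+1) (n+1) ⊆ brP (2*n+2) (symSet m t) ∧
  ((symSet m t) ∩ Finset.Icc 1 c).card = ((symSet m p) ∩ Finset.Icc 1 c).card + 1

/-- Exceptional cuts of `D(P,T)` in type `D`. -/
def excCut (n m : ℕ) (p t : ℕ → ℕ) (c : ℕ) : Prop :=
  (centerCut n m p t ∧ c = n+1) ∨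
  (tD n (symSet m t) ≠ tD n (symSet m p) ∧
    ∃ d, cutCandidate n m p t d ∧ (c = d ∨ c = 2*n+2 - d))

/-- The type-`D` cut set: apparent cuts together with exceptional cuts. -/
def cutD (n m : ℕ) (p t : ℕ → ℕ) (c : ℕ) : Prop :=
  appCut (2*n+2) m p t c ∨ excCut n m p t c

/-- The construction of the Schubert symbol `P'` from `T ⪯ P` in types `B` and `C`. -/
noncomputable def Pp (N m : ℕ) (p t : ℕ → ℕ) (i : ℕ) : ℕ :=
  if p i < t (i+1) then p i
  else if ¬ appCut N m p t (t (i+1) - 1) then t (i+1)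
  else ((Finset.Icc (t i) (t (i+1) - 1)).filter
        (fun c => ¬ LSet N m p t (appCut N m p t) c)).sup id

/-- The modified construction of the Schubert symbol `P̃` from `T ⪯ P` in type `D`. -/
noncomputable def Ptil (n m : ℕ) (p t : ℕ → ℕ) (i : ℕ) : ℕ :=
  if p i < t (i+1) then p i
  else if ¬ cutD n m p t (t (i+1) - 1) then
    (if t (i+1) = n+1 ∨ t (i+1) = n+2 then 2*n+3 - t (i+1) else t (i+1))
  else ((Finset.Icc (t i) (t (i+1) - 1)).filter
        (fun c => ¬ LSet (2*n+2) m p t (cutD n m p t) c)).sup id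

/-- A critical window `[c+1, N−c]` in `D(P,T)` (type `D`, defined when `t(T) ≠ t(P)`):
`c` and `N−c` are visible cuts and `[c+1,n+1] ⊆ [T] ∩ [P]`. -/
def critWindow (n m : ℕ) (p t : ℕ → ℕ) (c : ℕ) : Prop :=
  c ≤ n ∧ tD n (symSet m t) ≠ tD n (symSet m p) ∧
  visCut m p t c ∧ visCut m p t (2*n+2 - c) ∧
  Finset.Icc (c+1) (n+1) ⊆ brP (2*n+2) (symSet m t) ∧
  Finset.Icc (c+1) (n+1) ⊆ brP (2*n+2) (symSet m p)

/-- The quadratic form `f_c = x_1 x_N + … + x_c x_{N+1−c}`. -/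
noncomputable def fquad (N : ℕ) (c : ℕ) (x : ℕ → ℂ) : ℂ := ∑ i ∈ Finset.Icc 1 c, x i * x (N+1-i)

/-- The variety `Z_{P,T}` (affine cone) cut out by quadratic equations `f_c = 0`
for `c` in a prescribed set `Q` and linear equations `x_c = 0` for `c ∈ 𝓛_{P,T}`. -/
def Zvar (N m : ℕ) (p t : ℕ → ℕ) (Q : ℕ → Prop) (cut : ℕ → Prop) : Set (ℕ → ℂ) :=
  {x | (∀ c, Q c → fquad N c x = 0) ∧ ∀ c, LSet N m p t cut c → x c = 0}

section StmtTenAux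

variable {N m : ℕ} {p t : ℕ → ℕ}

lemma mono_le' (h : IsSSym N m p) {i j : ℕ} (hij : i ≤ j) (hj : j ≤ m + 1) :
    p i ≤ p j := by
  rcases Nat.lt_or_ge i j with h' | h'
  · exact (h.mono i j h' hj).le
  · have : i = j := by omega
    simp [this]

lemma idx_lt_of_lt (h : IsSSym N m p) {i j : ℕ} (hi : i ≤ m + 1) (hlt : p i < p j) :
    i < j := by
  by_contra hc
  push_neg at hc
  have := mono_le' h hc hi
  omega

lemma pos_t (h : IsSSym N m t) {j : ℕ} (h1 : 1 ≤ j) (h2 : j ≤ m + 1) : 1 ≤ t j := by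
  have h' := h.mono 0 j (by omega) h2
  have h0 := h.zero
  omega

lemma isoT2 (h : IsSSym N m t) (i j : ℕ) (h1 : 1 ≤ i) (h2 : i ≤ m + 1)
    (h3 : 1 ≤ j) (h4 : j ≤ m + 1) : t i + t j ≠ N + 1 := by
  intro heq
  by_cases hi : i ≤ m <;> by_cases hj : j ≤ m
  · exact h.iso i j h1 hi h3 hj heq
  · have hj' : j = m + 1 := by omega
    have := pos_t h h1 h2
    rw [hj', h.top] at heq
    omega
  · have hi' : i = m + 1 := by omega
    have := pos_t h h3 h4
    rw [hi', h.top] at heq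
    omega
  · have hi' : i = m + 1 := by omega
    have hj' : j = m + 1 := by omega
    rw [hi', hj', h.top] at heq
    omega

lemma appCut_symm {c : ℕ} (h : c ≤ N) (hC : appCut N m p t c) :
    appCut N m p t (N - c) := by
  unfold appCut at hC ⊢
  rw [Nat.sub_sub_self h]
  tauto

lemma notL_t (hp : IsSSym N m p) (ht : IsSSym N m t) (hle : leS m t p)
    {i : ℕ} (h1 : 1 ≤ i) (h2 : i ≤ m) :
    ¬ LSet N m p t (appCut N m p t) (t i) := by
  intro hL
  unfold LSet zeroCol loneStar at hL
  obtain ⟨hc1, hc2, hz | ⟨j, hj1, hj2, hj3, hj4, hj5⟩⟩ := hL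
  · obtain ⟨k, hk, hpk, htk⟩ := hz
    have hik : i < k + 1 := idx_lt_of_lt ht (by omega) htk
    have h7 : t i ≤ t k := mono_le' ht (by omega) (by omega)
    have h8 : t k ≤ p k := hle k (by omega) hk
    omega
  · rcases hj5 with ⟨he, _⟩ | ⟨he, hcut⟩
    · exact ht.iso i j h1 h2 hj1 hj2 (by omega)
    · unfold appCut visCut at hcut
      rcases hcut with ⟨k, hk, h5, h6⟩ | ⟨k, hk, h5, h6⟩
      · -- vis (N+1 - t i - 1)
        have hkj : k < j := idx_lt_of_lt hp (by omega) (by omega : p k < p j)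
        have h7 : t (k+1) ≤ t j := mono_le' ht (by omega) (by omega)
        have h8 : t j ≤ p j := hle j hj1 hj2
        exact isoT2 ht (k+1) i (by omega) (by omega) h1 (by omega) (by omega)
      · -- vis (N - (N+1 - t i - 1)) = vis (t i)
        rw [show N - (N + 1 - t i - 1) = t i by omega] at h5 h6
        have hik : i < k + 1 := idx_lt_of_lt ht (by omega) h6
        have h7 : t i ≤ t k := mono_le' ht (by omega) (by omega)
        have h8 : t k ≤ p k := hle k (by omega) hk
        have hki : k = i := by
          by_contra hne
          have := ht.mono i k (by omega) (by omega)
          omega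
        have e1 : p k = p i := by rw [hki]
        have e2 : t k = t i := by rw [hki]
        exact hp.iso i j h1 h2 hj1 hj2 (by omega)

lemma notL_p (hp : IsSSym N m p) (ht : IsSSym N m t) (hle : leS m t p)
    {i : ℕ} (h1 : 1 ≤ i) (h2 : i ≤ m) :
    ¬ LSet N m p t (appCut N m p t) (p i) := by
  intro hL
  unfold LSet zeroCol loneStar at hL
  obtain ⟨hc1, hc2, hz | ⟨j, hj1, hj2, hj3, hj4, hj5⟩⟩ := hL
  · obtain ⟨k, hk, ha, hb⟩ := hz
    have hki : k < i := idx_lt_of_lt hp (by omega) ha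
    have h7 : t (k+1) ≤ t i := mono_le' ht (by omega) (by omega)
    have h8 := hle i h1 h2
    omega
  · rcases hj5 with ⟨he, hcut⟩ | ⟨he, _⟩
    · unfold appCut visCut at hcut
      rcases hcut with ⟨k, hk, h5, h6⟩ | ⟨k, hk, h5, h6⟩
      · -- vis (N+1-p i) = vis (t j)
        have h6' : t j < t (k+1) := by omega
        have hjk : j < k + 1 := idx_lt_of_lt ht (by omega) h6'
        have h7 : t j ≤ t k := mono_le' ht (by omega) (by omega)
        have h8 : t k ≤ p k := hle k (by omega) hk
        have hkj : k = j := by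
          by_contra hne
          have := ht.mono j k (by omega) (by omega)
          omega
        have e1 : p k = p j := by rw [hkj]
        have e2 : t k = t j := by rw [hkj]
        exact hp.iso i j h1 h2 hj1 hj2 (by omega)
      · -- vis (N - (N+1-p i)) = vis (p i - 1)
        rw [show N - (N + 1 - p i) = p i - 1 by omega] at h5 h6
        have hki : k < i := idx_lt_of_lt hp (by omega) (by omega : p k < p i)
        have h7 : t (k+1) ≤ t i := mono_le' ht (by omega) (by omega)
        have h8 := hle i h1 h2
        exact ht.iso i j h1 h2 hj1 hj2 (by omega)
    · exact hp.iso i j h1 h2 hj1 hj2 (by omega)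

lemma L_cut (hp : IsSSym N m p) (ht : IsSSym N m t) (hle : leS m t p)
    {c : ℕ} (hL : LSet N m p t (appCut N m p t) c) :
    appCut N m p t c ∧ appCut N m p t (c - 1) := by
  unfold LSet zeroCol loneStar at hL
  obtain ⟨h1, h2, hz | ⟨j, hj1, hj2, hj3, hj4, hj5⟩⟩ := hL
  · obtain ⟨k, hk, ha, hb⟩ := hz
    constructor
    · exact Or.inl ⟨k, hk, by omega, hb⟩
    · exact Or.inl ⟨k, hk, by omega, by omega⟩
  · rcases hj5 with ⟨he, hcut⟩ | ⟨he, hcut⟩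
    · -- N+1-c = t j, cut (N+1-c)
      constructor
      · -- appCut c
        unfold appCut visCut at hcut ⊢
        rcases hcut with ⟨k, hk, h5, h6⟩ | ⟨k, hk, h5, h6⟩
        · -- vis (N+1-c) = vis (t j)
          have h6' : t j < t (k+1) := by omega
          have hjk : j < k + 1 := idx_lt_of_lt ht (by omega) h6'
          have h7 : t j ≤ t k := mono_le' ht (by omega) (by omega)
          have h8 : t k ≤ p k := hle k (by omega) hk
          have hkj : k = j := by
            by_contra hne
            have := ht.mono j k (by omega) (by omega)
            omega
          have e1 : p k = p j := by rw [hkj]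
          have e2 : t k = t j := by rw [hkj]
          right
          refine ⟨j - 1, by omega, ?_, ?_⟩
          · have := hp.mono (j-1) j (by omega) (by omega)
            omega
          · rw [show j - 1 + 1 = j by omega]
            omega
        · -- vis (N - (N+1-c)) = vis (c-1)
          rw [show N - (N + 1 - c) = c - 1 by omega] at h5 h6
          by_cases hck : c < t (k+1)
          · exact Or.inl ⟨k, hk, by omega, hck⟩
          · exfalso
            exact isoT2 ht (k+1) j (by omega) (by omega) (by omega) (by omega) (by omega)
      · -- appCut (c-1)
        unfold appCut visCut at hcut ⊢
        rcases hcut with h | h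
        · right
          rw [show N - (c - 1) = N + 1 - c by omega]
          exact h
        · left
          rw [show N - (N + 1 - c) = c - 1 by omega] at h
          exact h
    · -- N+1-c = p j, cut (N+1-c-1)
      constructor
      · -- appCut c
        unfold appCut visCut at hcut ⊢
        rcases hcut with h | h
        · right
          rw [show N - c = N + 1 - c - 1 by omega]
          exact h
        · left
          rw [show N - (N + 1 - c - 1) = c by omega] at h
          exact h
      · -- appCut (c-1)
        unfold appCut visCut at hcut ⊢
        rcases hcut with ⟨k, hk, h5, h6⟩ | ⟨k, hk, h5, h6⟩
        · -- vis (N+1-c-1) = vis (p j - 1)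
          have hkj : k < j := idx_lt_of_lt hp (by omega) (by omega : p k < p j)
          have h7 : t (k+1) ≤ t j := mono_le' ht (by omega) (by omega)
          have h8 : t j ≤ p j := hle j hj1 hj2
          have h9 : t j = N + 1 - c := by omega
          have h10 := ht.mono j (j+1) (by omega) (by omega)
          right
          exact ⟨j, hj2, by omega, by omega⟩
        · -- vis (N - (N+1-c-1)) = vis c
          rw [show N - (N + 1 - c - 1) = c by omega] at h5 h6
          by_cases hp5 : p k ≤ c - 1
          · exact Or.inl ⟨k, hk, hp5, by omega⟩
          · exfalso
            have hk1 : 1 ≤ k := by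
              rcases Nat.eq_zero_or_pos k with rfl | h
              · have := hp.zero; omega
              · exact h
            exact hp.iso k j hk1 hk hj1 hj2 (by omega)

lemma consec (hp : IsSSym N m p) (ht : IsSSym N m t) (hle : leS m t p)
    {c : ℕ} (h1 : 1 ≤ c) (h2 : c ≤ N)
    (hc1 : appCut N m p t (c - 1)) (hc : appCut N m p t c) :
    LSet N m p t (appCut N m p t) c ∨ LSet N m p t (appCut N m p t) (N + 1 - c) := by
  unfold appCut visCut at hc
  rcases hc with ⟨l, hl, h5, h6⟩ | ⟨k, hk, h5, h6⟩
  · by_cases hplc : p l < c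
    · exact Or.inl ⟨h1, h2, Or.inl ⟨l, hl, hplc, h6⟩⟩
    · have hpl : p l = c := by omega
      have hl1 : 1 ≤ l := by
        rcases Nat.eq_zero_or_pos l with rfl | h
        · have := hp.zero; omega
        · exact h
      refine Or.inr ⟨by omega, by omega, Or.inr ⟨l, ?_⟩⟩
      unfold loneStar
      rw [show N + 1 - (N + 1 - c) = c by omega]
      have := hle l hl1 hl
      exact ⟨hl1, hl, by omega, by omega, Or.inr ⟨hpl.symm, hc1⟩⟩
  · by_cases hdt : N + 1 - c < t (k+1)
    · exact Or.inr ⟨by omega, by omega, Or.inl ⟨k, hk, by omega, hdt⟩⟩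
    · have hteq : t (k+1) = N + 1 - c := by omega
      have hk1m : k + 1 ≤ m := by
        by_contra h
        have hkm : k = m := by omega
        rw [hkm] at hteq
        have := ht.top
        omega
      refine Or.inl ⟨h1, h2, Or.inr ⟨k+1, ?_⟩⟩
      unfold loneStar
      have h8 := hle (k+1) (by omega) hk1m
      refine ⟨by omega, hk1m, by omega, by omega, Or.inl ⟨hteq.symm, ?_⟩⟩
      unfold appCut visCut at hc1 ⊢
      rcases hc1 with h | h
      · right
        rw [show N - (N + 1 - c) = c - 1 by omega]
        exact h
      · left
        rw [show N - (c - 1) = N + 1 - c by omega] at h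
        exact h

lemma Pp_spec (hp : IsSSym N m p) (ht : IsSSym N m t) (hle : leS m t p)
    {i : ℕ} (h1 : 1 ≤ i) (h2 : i ≤ m) :
    t i ≤ Pp N m p t i ∧ Pp N m p t i ≤ t (i+1) ∧
    ¬ LSet N m p t (appCut N m p t) (Pp N m p t i) ∧
    ((Pp N m p t i = p i ∧ p i < t (i+1) ∧ appCut N m p t (Pp N m p t i)) ∨
     (Pp N m p t i = t (i+1) ∧ ¬ appCut N m p t (t (i+1) - 1) ∧ t (i+1) ≤ p i) ∨
     (Pp N m p t i < t (i+1) ∧ appCut N m p t (Pp N m p t i) ∧ t (i+1) ≤ p i)) := by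
  have htlt : t i < t (i+1) := ht.mono i (i+1) (by omega) (by omega)
  unfold Pp
  by_cases hA : p i < t (i+1)
  · rw [if_pos hA]
    refine ⟨hle i h1 h2, hA.le, notL_p hp ht hle h1 h2,
      Or.inl ⟨rfl, hA, Or.inl ⟨i, h2, le_rfl, hA⟩⟩⟩
  rw [if_neg hA]
  by_cases hB : appCut N m p t (t (i+1) - 1)
  case neg =>
    rw [if_pos hB]
    refine ⟨htlt.le, le_rfl, ?_, Or.inr (Or.inl ⟨rfl, hB, by omega⟩)⟩
    by_cases him : i = m
    · intro hLL
      unfold LSet at hLL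
      rw [him, ht.top] at hLL
      omega
    · exact notL_t hp ht hle (by omega) (by omega)
  case pos =>
    rw [if_neg (not_not.mpr hB)]
    have hcut : appCut N m p t (t (i+1) - 1) := hB
    set S := (Finset.Icc (t i) (t (i+1) - 1)).filter
        (fun c => ¬ LSet N m p t (appCut N m p t) c) with hS
    have hmem : t i ∈ S := by
      rw [hS]
      exact Finset.mem_filter.mpr ⟨Finset.mem_Icc.mpr ⟨le_rfl, by omega⟩,
        notL_t hp ht hle h1 h2⟩
    obtain ⟨b, hbS, hsup⟩ := Finset.exists_mem_eq_sup S ⟨t i, hmem⟩ id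
    rw [hS] at hbS
    obtain ⟨hbIcc, hbL⟩ := Finset.mem_filter.mp hbS
    obtain ⟨hb1, hb2⟩ := Finset.mem_Icc.mp hbIcc
    rw [hsup]
    simp only [id_eq]
    have hCb : appCut N m p t b := by
      by_cases hbtop : b = t (i+1) - 1
      · rwa [hbtop]
      · have hbL1 : LSet N m p t (appCut N m p t) (b + 1) := by
          by_contra hno
          have hmem1 : b + 1 ∈ S := by
            rw [hS]
            exact Finset.mem_filter.mpr ⟨Finset.mem_Icc.mpr ⟨by omega, by omega⟩, hno⟩
          have hle1 := Finset.le_sup (f := id) hmem1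
          rw [hsup] at hle1
          simp only [id_eq] at hle1
          omega
        have := (L_cut hp ht hle hbL1).2
        simpa using this
    exact ⟨hb1, by omega, hbL, Or.inr (Or.inr ⟨by omega, hCb, by omega⟩)⟩

end StmtTenAux

/-- (types B/C) The set `P'` constructed from `T ⪯ P` is a Schubert
symbol: its elements `p'_1 < … < p'_m` are distinct and no two of them sum to `N+1`. -/
theorem stmt_10 (N m : ℕ) (p t : ℕ → ℕ)
    (hp : IsSSym N m p) (ht : IsSSym N m t) (hle : leS m t p) :
    (∀ i j, 1 ≤ i → i < j → j ≤ m → Pp N m p t i < Pp N m p t j) ∧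
    (∀ i j, 1 ≤ i → i ≤ m → 1 ≤ j → j ≤ m →
      Pp N m p t i + Pp N m p t j ≠ N+1) := by
  constructor
  · intro i j hi hij hj
    obtain ⟨Hti, Hui, HLi, Hcasei⟩ := Pp_spec hp ht hle hi (by omega)
    obtain ⟨Htj, Huj, HLj, Hcasej⟩ := Pp_spec hp ht hle (by omega : 1 ≤ j) hj
    by_contra hcon
    push_neg at hcon
    have h2 : t (i+1) ≤ t j := mono_le' ht (by omega) (by omega)
    have hEq1 : Pp N m p t i = t (i+1) := by omega
    have hEq2 : t (i+1) = t j := by omega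
    have hEq3 : Pp N m p t j = t j := by omega
    rcases Hcasei with ⟨ha, hb, _⟩ | ⟨_, hnc, hpi⟩ | ⟨hlt, _, _⟩
    · omega
    · rcases Hcasej with ⟨ha, hb, _⟩ | ⟨ha, _, _⟩ | ⟨_, hCb, hpj⟩
      · have := hp.mono i j hij (by omega); omega
      · have := ht.mono j (j+1) (by omega) (by omega); omega
      · rw [hEq3] at hCb
        have htjN : t j ≤ N := ht.ub j (by omega) hj
        have htj1 : 1 ≤ t j := pos_t ht (by omega) (by omega)
        unfold appCut visCut at hCb
        rcases hCb with ⟨k, hk, h5, h6⟩ | ⟨k, hk, h5, h6⟩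
        · have hjk : j < k + 1 := idx_lt_of_lt ht (by omega) h6
          have h7 : t j ≤ t k := mono_le' ht (by omega) (by omega)
          have h8 : t k ≤ p k := hle k (by omega) hk
          have hkj : k = j := by
            by_contra hne
            have := ht.mono j k (by omega) (by omega)
            omega
          have e1 : p k = p j := by rw [hkj]
          have e2 : t k = t j := by rw [hkj]
          have h10 := ht.mono j (j+1) (by omega) (by omega)
          omega
        · apply hnc
          rw [hEq2]
          unfold appCut visCut
          by_cases hlt2 : N - t j + 1 < t (k+1)
          · exact Or.inr ⟨k, hk, by omega, by omega⟩
          · exfalso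
            exact isoT2 ht (k+1) j (by omega) (by omega) (by omega) (by omega) (by omega)
    · omega
  · intro i j hi1 hi2 hj1 hj2 hsum
    obtain ⟨Hti, Hui, HLi, Hcasei⟩ := Pp_spec hp ht hle hi1 hi2
    obtain ⟨Htj, Huj, HLj, Hcasej⟩ := Pp_spec hp ht hle hj1 hj2
    have hti1 : 1 ≤ t i := pos_t ht hi1 (by omega)
    have htj1 : 1 ≤ t j := pos_t ht hj1 (by omega)
    have haN : Pp N m p t i ≤ N := by omega
    have hbN : Pp N m p t j ≤ N := by omega
    have Hi' : appCut N m p t (Pp N m p t i) ∨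
        (Pp N m p t i = t (i+1) ∧ ¬ appCut N m p t (t (i+1) - 1)) := by
      rcases Hcasei with ⟨_, _, h⟩ | ⟨e, h, _⟩ | ⟨_, h, _⟩
      exacts [Or.inl h, Or.inr ⟨e, h⟩, Or.inl h]
    have Hj' : appCut N m p t (Pp N m p t j) ∨
        (Pp N m p t j = t (j+1) ∧ ¬ appCut N m p t (t (j+1) - 1)) := by
      rcases Hcasej with ⟨_, _, h⟩ | ⟨e, h, _⟩ | ⟨_, h, _⟩
      exacts [Or.inl h, Or.inr ⟨e, h⟩, Or.inl h]
    rcases Hi' with hCa | ⟨hai2, hna⟩ <;> rcases Hj' with hCb | ⟨hbj2, hnb⟩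
    · have hCb1 : appCut N m p t (Pp N m p t j - 1) := by
        rw [show Pp N m p t j - 1 = N - Pp N m p t i by omega]
        exact appCut_symm haN hCa
      rcases consec hp ht hle (by omega) hbN hCb1 hCb with hLb | hLa
      · exact HLj hLb
      · apply HLi
        rwa [show N + 1 - Pp N m p t j = Pp N m p t i by omega] at hLa
    · apply hnb
      rw [show t (j+1) - 1 = N - Pp N m p t i by omega]
      exact appCut_symm haN hCa
    · apply hna
      rw [show t (i+1) - 1 = N - Pp N m p t j by omega]
      exact appCut_symm hbN hCb
    · exact isoT2 ht (i+1) (j+1) (by omega) (by omega) (by omega) (by omega) (by omega)
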